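/- Let P be a commutative ring, f ∈ P a non-zerodivisor, and (φ, ψ) a matrix factorization of f with φ, ψ ∈ M_m(P), φψ = ψφ = f·I_m. Set R = P/(f) and let φ̄, ψ̄ be the reductions of φ, ψ modulo f. Then the sequence of R-modules ⋯ → R^m →^{ψ̄} R^m →^{φ̄} R^m →^{ψ̄} R^m → ⋯ is exact, i.e., ker φ̄ = im ψ̄ and ker ψ̄ = im φ̄. -/

import Mathlib

open Matrix

private lemma mf_exact_aux (P : Type*) [CommRing P] (m : ℕ) (f : P)
    (hf : f ∈ nonZeroDivisors P)
    (φ ψ : Matrix (Fin m) (Fin m) P)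
    (h1 : φ * ψ = f • (1 : Matrix (Fin m) (Fin m) P))
    (h2 : ψ * φ = f • (1 : Matrix (Fin m) (Fin m) P)) :
    Function.Exact
        ((ψ.map (Ideal.Quotient.mk (Ideal.span {f}))).mulVecLin)
        ((φ.map (Ideal.Quotient.mk (Ideal.span {f}))).mulVecLin) := by
  set g := Ideal.Quotient.mk (Ideal.span {f}) with hg
  have hinj : ∀ v : Fin m → P, φ.mulVec v = 0 → v = 0 := by
    intro v hv
    have : (ψ * φ).mulVec v = 0 := by
      rw [← Matrix.mulVec_mulVec, hv, Matrix.mulVec_zero]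
    rw [h2, Matrix.smul_mulVec, Matrix.one_mulVec] at this
    funext i
    have := congrFun this i
    simp only [Pi.smul_apply, smul_eq_mul, Pi.zero_apply] at this
    exact mem_nonZeroDivisors_iff_right.mp hf _ (by rw [mul_comm]; exact this)
  intro x
  constructor
  · intro hx
    choose X hX using fun i => Ideal.Quotient.mk_surjective (x i)
    have hmem : ∀ i, (φ.mulVec X) i ∈ Ideal.span {f} := by
      intro i
      rw [← Ideal.Quotient.eq_zero_iff_mem]
      have h := RingHom.map_mulVec g φ X i
      have hgx : g ∘ X = x := funext hX
      rw [hgx] at h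
      rw [h]
      exact congrFun hx i
    choose Y hY using fun i => Ideal.mem_span_singleton'.mp (hmem i)
    have key : φ.mulVec X = φ.mulVec (ψ.mulVec Y) := by
      rw [Matrix.mulVec_mulVec, h1, Matrix.smul_mulVec, Matrix.one_mulVec]
      funext i
      simp only [Pi.smul_apply, smul_eq_mul]
      rw [← hY i, mul_comm]
    have hXY : X = ψ.mulVec Y := by
      have : φ.mulVec (X - ψ.mulVec Y) = 0 := by
        rw [Matrix.mulVec_sub, key, sub_self]
      have := hinj _ this
      exact sub_eq_zero.mp this
    refine ⟨g ∘ Y, ?_⟩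
    funext i
    simp only [Matrix.mulVecLin_apply]
    rw [← (RingHom.map_mulVec g ψ Y i), ← hXY, hX]
  · rintro ⟨y, rfl⟩
    simp only [Matrix.mulVecLin_apply, Matrix.mulVec_mulVec, ← Matrix.map_mul, h1]
    have : (f • (1 : Matrix (Fin m) (Fin m) P)).map g = 0 := by
      ext i j
      simp only [Matrix.map_apply, Matrix.smul_apply, smul_eq_mul, Matrix.zero_apply]
      rw [_root_.map_mul]
      have : g f = 0 := by
        rw [hg, Ideal.Quotient.eq_zero_iff_mem]
        exact Ideal.mem_span_singleton_self f
      rw [this, zero_mul]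
    rw [this, Matrix.zero_mulVec]

/-- Exactness of the 2-periodic complex associated to a matrix factorization:
if `φψ = ψφ = f·I_m` with `f` a non-zerodivisor and `R = P/(f)`, then the
complex `⋯ → R^m →^ψ̄ R^m →^φ̄ R^m →^ψ̄ R^m → ⋯` is exact, i.e.
`ker φ̄ = im ψ̄` and `ker ψ̄ = im φ̄`. -/
theorem matrix_factorization_exact (P : Type*) [CommRing P] (m : ℕ) (f : P)
    (hf : f ∈ nonZeroDivisors P)
    (φ ψ : Matrix (Fin m) (Fin m) P)
    (h1 : φ * ψ = f • (1 : Matrix (Fin m) (Fin m) P))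
    (h2 : ψ * φ = f • (1 : Matrix (Fin m) (Fin m) P)) :
    Function.Exact
        ((ψ.map (Ideal.Quotient.mk (Ideal.span {f}))).mulVecLin)
        ((φ.map (Ideal.Quotient.mk (Ideal.span {f}))).mulVecLin) ∧
      Function.Exact
        ((φ.map (Ideal.Quotient.mk (Ideal.span {f}))).mulVecLin)
        ((ψ.map (Ideal.Quotient.mk (Ideal.span {f}))).mulVecLin) := by
  exact ⟨mf_exact_aux P m f hf φ ψ h1 h2, mf_exact_aux P m f hf ψ φ h2 h1⟩
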